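/- Let m, m_t, m_r be positive integers with m_t ≤ m, m_r ≤ m and m_t + m_r > m. Let U be Haar distributed on U(m), let H be the upper-left m_r×m_t block of U, and let H' be the lower-right (m−m_t)×(m−m_r) block of U. Then for every s ≥ 0, E[ln det(I_{m_t} + s·HᴴH)] = (m_t + m_r − m)·ln(1 + s) + E[ln det(I_{m−m_r} + s·H'ᴴH')], where both expectations are over the Haar probability measure on U(m). -/

import Mathlib

open MeasureTheory Matrix

/-- Borel measurable-space structure on the unitary group `U(m)`. -/
noncomputable instance (m : ℕ) : MeasurableSpace (Matrix.unitaryGroup (Fin m) ℂ) := borel _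

instance (m : ℕ) : BorelSpace (Matrix.unitaryGroup (Fin m) ℂ) := ⟨rfl⟩

/-- The MIMO Jacobi fading channel matrix: the upper-left `mr × mt` block of a
unitary `m × m` matrix `U`. -/
noncomputable def jacobiH (m mt mr : ℕ) (hr : mr ≤ m) (ht : mt ≤ m)
    (U : Matrix.unitaryGroup (Fin m) ℂ) : Matrix (Fin mr) (Fin mt) ℂ :=
  (U : Matrix (Fin m) (Fin m) ℂ).submatrix (Fin.castLE hr) (Fin.castLE ht)

/-- The ergodic capacity `E[ln det (I + s · Hᴴ H)]` of the MIMO Jacobi fading channel,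
the expectation being taken with respect to the measure `μ` on the unitary group. -/
noncomputable def ergodicCapacity (m mt mr : ℕ) (hr : mr ≤ m) (ht : mt ≤ m) (s : ℝ)
    (μ : Measure (Matrix.unitaryGroup (Fin m) ℂ)) : ℝ :=
  ∫ U, Real.log ((Matrix.det ((1 : Matrix (Fin mt) (Fin mt) ℂ) +
      (s : ℂ) • ((jacobiH m mt mr hr ht U)ᴴ * jacobiH m mt mr hr ht U))).re) ∂μ

/-- The lower-right `(m − mt) × (m − mr)` block of a unitary `m × m` matrix `U`,
i.e. the submatrix on rows `mt, …, m−1` and columns `mr, …, m−1`. -/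
noncomputable def jacobiH' (m mt mr : ℕ) (U : Matrix.unitaryGroup (Fin m) ℂ) :
    Matrix (Fin (m - mt)) (Fin (m - mr)) ℂ :=
  fun i j => (U : Matrix (Fin m) (Fin m) ℂ)
    ⟨mt + i.1, by have := i.2; omega⟩ ⟨mr + j.1, by have := j.2; omega⟩


lemma sum_split {M : Type*} [AddCommMonoid M] {m k : ℕ} (hk : k ≤ m) (f : Fin m → M) :
    ∑ i, f i = (∑ i : Fin k, f (Fin.castLE hk i)) +
      ∑ i : Fin (m - k), f ⟨k + i.1, by have := i.2; omega⟩ := by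
  have h : k + (m - k) = m := by omega
  rw [← (finCongr h).sum_comp f, Fin.sum_univ_add]
  congr 1

lemma det_key {p n : ℕ} (x : ℂ) (hx : x ≠ 0) (A : Matrix (Fin p) (Fin n) ℂ)
    (B : Matrix (Fin n) (Fin p) ℂ) :
    x ^ n * Matrix.det (x • 1 + A * B) = x ^ p * Matrix.det (x • 1 + B * A) := by
  have h1 : x • (1 + (x⁻¹ • A) * B) = x • (1 : Matrix (Fin p) (Fin p) ℂ) + A * B := by
    rw [smul_add, Matrix.smul_mul, smul_inv_smul₀ hx]
  have h2 : x • (1 + B * (x⁻¹ • A)) = x • (1 : Matrix (Fin n) (Fin n) ℂ) + B * A := by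
    rw [smul_add, Matrix.mul_smul, smul_inv_smul₀ hx]
  rw [← h1, ← h2, Matrix.det_smul, Matrix.det_smul, Fintype.card_fin, Fintype.card_fin,
    Matrix.det_one_add_mul_comm]
  ring


/-- rows `mr…m-1`, cols `0…mt-1` -/
noncomputable def Fblk (m mt mr : ℕ) (ht : mt ≤ m) (U : Matrix.unitaryGroup (Fin m) ℂ) :
    Matrix (Fin (m - mr)) (Fin mt) ℂ :=
  fun i j => (U : Matrix (Fin m) (Fin m) ℂ) ⟨mr + i.1, by have := i.2; omega⟩ (Fin.castLE ht j)

/-- rows `mr…m-1`, cols `mt…m-1` -/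
noncomputable def Dblk (m mt mr : ℕ) (U : Matrix.unitaryGroup (Fin m) ℂ) :
    Matrix (Fin (m - mr)) (Fin (m - mt)) ℂ :=
  fun i j => (U : Matrix (Fin m) (Fin m) ℂ)
    ⟨mr + i.1, by have := i.2; omega⟩ ⟨mt + j.1, by have := j.2; omega⟩

section Gram

variable {m mt mr : ℕ} (hr : mr ≤ m) (ht : mt ≤ m) (U : Matrix.unitaryGroup (Fin m) ℂ)

lemma gram1 : (jacobiH m mt mr hr ht U)ᴴ * jacobiH m mt mr hr ht U +
    (Fblk m mt mr ht U)ᴴ * Fblk m mt mr ht U = 1 := by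
  have hU : star (U : Matrix (Fin m) (Fin m) ℂ) * U = 1 := (Unitary.mem_iff.mp U.2).1
  ext j k
  have h := sum_split hr (fun i => star ((U : Matrix (Fin m) (Fin m) ℂ) i (Fin.castLE ht j)) *
      (U : Matrix (Fin m) (Fin m) ℂ) i (Fin.castLE ht k))
  have h2 : (star (U : Matrix (Fin m) (Fin m) ℂ) * U) (Fin.castLE ht j) (Fin.castLE ht k)
      = ∑ i, star ((U : Matrix (Fin m) (Fin m) ℂ) i (Fin.castLE ht j)) *
        (U : Matrix (Fin m) (Fin m) ℂ) i (Fin.castLE ht k) := by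
    simp [Matrix.mul_apply, Matrix.star_apply, Matrix.star_eq_conjTranspose,
      Matrix.conjTranspose_apply]
  simp only [Matrix.add_apply, Matrix.mul_apply, Matrix.conjTranspose_apply, jacobiH, Fblk,
    Matrix.submatrix_apply]
  rw [← h, ← h2, hU]
  simp [Matrix.one_apply, Fin.castLE_inj]

lemma gram2 : Fblk m mt mr ht U * (Fblk m mt mr ht U)ᴴ +
    Dblk m mt mr U * (Dblk m mt mr U)ᴴ = 1 := by
  have hU : (U : Matrix (Fin m) (Fin m) ℂ) * star (U : Matrix (Fin m) (Fin m) ℂ) = 1 :=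
    (Unitary.mem_iff.mp U.2).2
  ext i j
  have hi : mr + i.1 < m := by have := i.2; omega
  have hj : mr + j.1 < m := by have := j.2; omega
  have h := sum_split ht (fun c => (U : Matrix (Fin m) (Fin m) ℂ) ⟨mr + i.1, hi⟩ c *
      star ((U : Matrix (Fin m) (Fin m) ℂ) ⟨mr + j.1, hj⟩ c))
  have h2 : ((U : Matrix (Fin m) (Fin m) ℂ) * star (U : Matrix (Fin m) (Fin m) ℂ))
      ⟨mr + i.1, hi⟩ ⟨mr + j.1, hj⟩
      = ∑ c, (U : Matrix (Fin m) (Fin m) ℂ) ⟨mr + i.1, hi⟩ c *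
        star ((U : Matrix (Fin m) (Fin m) ℂ) ⟨mr + j.1, hj⟩ c) := by
    simp [Matrix.mul_apply, Matrix.star_apply, Matrix.star_eq_conjTranspose,
      Matrix.conjTranspose_apply]
  simp only [Matrix.add_apply, Matrix.mul_apply, Matrix.conjTranspose_apply, Fblk, Dblk]
  rw [← h, ← h2, hU]
  simp [Matrix.one_apply, Fin.ext_iff]

end Gram

section Pos

open scoped ComplexOrder

lemma smul_conjTranspose_mul {p n : ℕ} {s : ℝ} (hs : 0 ≤ s) (A : Matrix (Fin p) (Fin n) ℂ) :
    (s : ℂ) • (Aᴴ * A) = ((Real.sqrt s : ℂ) • A)ᴴ * ((Real.sqrt s : ℂ) • A) := by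
  rw [Matrix.conjTranspose_smul, Matrix.smul_mul, Matrix.mul_smul, smul_smul]
  congr 1
  rw [Complex.star_def, Complex.conj_ofReal, ← Complex.ofReal_mul, Real.mul_self_sqrt hs]

lemma smul_mul_conjTranspose {p n : ℕ} {s : ℝ} (hs : 0 ≤ s) (A : Matrix (Fin p) (Fin n) ℂ) :
    (s : ℂ) • (A * Aᴴ) = ((Real.sqrt s : ℂ) • A) * ((Real.sqrt s : ℂ) • A)ᴴ := by
  rw [Matrix.conjTranspose_smul, Matrix.smul_mul, Matrix.mul_smul, smul_smul]
  congr 1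
  rw [Complex.star_def, Complex.conj_ofReal, ← Complex.ofReal_mul, Real.mul_self_sqrt hs]

lemma posdef_one_add_CTmul {n p : ℕ} {s : ℝ} (hs : 0 ≤ s) (A : Matrix (Fin p) (Fin n) ℂ) :
    ((1 : Matrix (Fin n) (Fin n) ℂ) + (s : ℂ) • (Aᴴ * A)).PosDef := by
  rw [smul_conjTranspose_mul hs]
  exact Matrix.PosDef.one.add_posSemidef (Matrix.posSemidef_conjTranspose_mul_self _)

lemma posdef_one_add_mulCT {n p : ℕ} {s : ℝ} (hs : 0 ≤ s) (A : Matrix (Fin p) (Fin n) ℂ) :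
    ((1 : Matrix (Fin p) (Fin p) ℂ) + (s : ℂ) • (A * Aᴴ)).PosDef := by
  rw [smul_mul_conjTranspose hs]
  exact Matrix.PosDef.one.add_posSemidef (Matrix.posSemidef_self_mul_conjTranspose _)

lemma det_eq_re_ofPos {n : ℕ} {M : Matrix (Fin n) (Fin n) ℂ} (hM : M.PosDef) :
    M.det = ((M.det.re : ℝ) : ℂ) ∧ 0 < M.det.re := by
  have h := hM.det_pos
  rw [Complex.lt_def] at h
  obtain ⟨h1, h2⟩ := h
  simp only [Complex.zero_re, Complex.zero_im] at h1 h2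
  exact ⟨by apply Complex.ext <;> simp [← h2], h1⟩

end Pos

section PointwiseDet

variable {m mt mr : ℕ} (hr : mr ≤ m) (ht : mt ≤ m) (U : Matrix.unitaryGroup (Fin m) ℂ)
variable {s : ℝ}

lemma det_ident (hs : 0 ≤ s) :
    ((1 + s : ℝ) : ℂ) ^ (m - mr) *
      Matrix.det ((1 : Matrix (Fin mt) (Fin mt) ℂ) +
        (s : ℂ) • ((jacobiH m mt mr hr ht U)ᴴ * jacobiH m mt mr hr ht U))
    = ((1 + s : ℝ) : ℂ) ^ mt *
      Matrix.det ((1 : Matrix (Fin (m - mr)) (Fin (m - mr)) ℂ) +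
        (s : ℂ) • (Dblk m mt mr U * (Dblk m mt mr U)ᴴ)) := by
  set x : ℂ := ((1 + s : ℝ) : ℂ) with hxdef
  have hx : x ≠ 0 := by
    rw [hxdef]
    exact Complex.ofReal_ne_zero.mpr (by positivity)
  have hx1 : x = 1 + (s : ℂ) := by rw [hxdef]; push_cast; ring
  have hH : (jacobiH m mt mr hr ht U)ᴴ * jacobiH m mt mr hr ht U =
      1 - (Fblk m mt mr ht U)ᴴ * Fblk m mt mr ht U := by
    rw [← gram1 hr ht U]; abel
  have hF : Fblk m mt mr ht U * (Fblk m mt mr ht U)ᴴ =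
      1 - Dblk m mt mr U * (Dblk m mt mr U)ᴴ := by
    rw [← gram2 ht U]; abel
  have step1 : (1 : Matrix (Fin mt) (Fin mt) ℂ) +
      (s : ℂ) • ((jacobiH m mt mr hr ht U)ᴴ * jacobiH m mt mr hr ht U)
      = x • 1 + (Fblk m mt mr ht U)ᴴ * ((-(s : ℂ)) • Fblk m mt mr ht U) := by
    rw [hH, Matrix.mul_smul, hx1]
    simp only [smul_sub, add_smul, one_smul, neg_smul]
    abel
  have step3 : x • 1 + ((-(s : ℂ)) • Fblk m mt mr ht U) * (Fblk m mt mr ht U)ᴴ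
      = (1 : Matrix (Fin (m - mr)) (Fin (m - mr)) ℂ) +
        (s : ℂ) • (Dblk m mt mr U * (Dblk m mt mr U)ᴴ) := by
    rw [Matrix.smul_mul, hF, hx1]
    simp only [smul_sub, add_smul, one_smul, neg_smul]
    abel
  rw [step1, ← step3]
  exact det_key x hx _ _

lemma log_ident (hs : 0 ≤ s) :
    Real.log ((Matrix.det ((1 : Matrix (Fin mt) (Fin mt) ℂ) +
        (s : ℂ) • ((jacobiH m mt mr hr ht U)ᴴ * jacobiH m mt mr hr ht U))).re)
    = ((mt : ℝ) + mr - m) * Real.log (1 + s) +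
      Real.log ((Matrix.det ((1 : Matrix (Fin (m - mr)) (Fin (m - mr)) ℂ) +
        (s : ℂ) • (Dblk m mt mr U * (Dblk m mt mr U)ᴴ))).re) := by
  obtain ⟨hd1, hp1⟩ := det_eq_re_ofPos (posdef_one_add_CTmul hs (jacobiH m mt mr hr ht U))
  obtain ⟨hd2, hp2⟩ := det_eq_re_ofPos (posdef_one_add_mulCT hs (Dblk m mt mr U))
  have h := det_ident hr ht U hs
  rw [hd1, hd2] at h
  have hreal : (1 + s) ^ (m - mr) *
      (Matrix.det ((1 : Matrix (Fin mt) (Fin mt) ℂ) +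
        (s : ℂ) • ((jacobiH m mt mr hr ht U)ᴴ * jacobiH m mt mr hr ht U))).re
      = (1 + s) ^ mt *
      (Matrix.det ((1 : Matrix (Fin (m - mr)) (Fin (m - mr)) ℂ) +
        (s : ℂ) • (Dblk m mt mr U * (Dblk m mt mr U)ᴴ))).re := by
    exact_mod_cast h
  have hx0 : (0 : ℝ) < 1 + s := by positivity
  have hlog := congrArg Real.log hreal
  rw [Real.log_mul (by positivity) hp1.ne', Real.log_mul (by positivity) hp2.ne',
    Real.log_pow, Real.log_pow] at hlog
  have hcast : ((m - mr : ℕ) : ℝ) = (m : ℝ) - mr := by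
    rw [Nat.cast_sub hr]
  rw [hcast] at hlog
  have heq : ((mt : ℝ) + mr - m) = (mt : ℝ) - ((m : ℝ) - mr) := by ring
  rw [heq]
  linarith

end PointwiseDet

section Topology

variable (m : ℕ)

example : ContinuousMul (Matrix.unitaryGroup (Fin m) ℂ) := by infer_instance

instance : SecondCountableTopology (Matrix (Fin m) (Fin m) ℂ) :=
  (inferInstance : SecondCountableTopology (Fin m → Fin m → ℂ))

instance : SecondCountableTopology (Matrix.unitaryGroup (Fin m) ℂ) :=
  Topology.IsEmbedding.subtypeVal.secondCountableTopology

instance : ContinuousInv (Matrix.unitaryGroup (Fin m) ℂ) := by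
  constructor
  have h : Continuous fun U : Matrix.unitaryGroup (Fin m) ℂ =>
      (star (U : Matrix (Fin m) (Fin m) ℂ)) := continuous_subtype_val.star
  exact continuous_induced_rng.mpr h

instance : CompactSpace (Matrix.unitaryGroup (Fin m) ℂ) := by
  apply isCompact_iff_compactSpace.mp
  have hsub : (Matrix.unitaryGroup (Fin m) ℂ : Set (Matrix (Fin m) (Fin m) ℂ)) ⊆
      Set.univ.pi fun _ : Fin m => Set.univ.pi fun _ : Fin m => Metric.closedBall (0 : ℂ) 1 := by
    intro M hM
    intro i _ 
    intro j _
    simpa using entry_norm_bound_of_unitary hM i j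
  have hK : IsCompact (Set.univ.pi fun _ : Fin m =>
      Set.univ.pi fun _ : Fin m => Metric.closedBall (0 : ℂ) 1) :=
    isCompact_univ_pi fun _ => isCompact_univ_pi fun _ => isCompact_closedBall _ _
  have hC : IsClosed (Matrix.unitaryGroup (Fin m) ℂ : Set (Matrix (Fin m) (Fin m) ℂ)) := by
    have h1 : IsClosed {M : Matrix (Fin m) (Fin m) ℂ | star M * M = 1} :=
      isClosed_eq ((continuous_id.star).matrix_mul continuous_id) continuous_const
    have h2 : IsClosed {M : Matrix (Fin m) (Fin m) ℂ | M * star M = 1} :=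
      isClosed_eq (continuous_id.matrix_mul continuous_id.star) continuous_const
    have : (Matrix.unitaryGroup (Fin m) ℂ : Set (Matrix (Fin m) (Fin m) ℂ)) =
        {M | star M * M = 1} ∩ {M | M * star M = 1} := by
      ext M
      exact Unitary.mem_iff
    rw [this]
    exact h1.inter h2
  exact hK.of_isClosed_subset hC hsub

end Topology

section MeasureStuff

open scoped ENNReal

lemma right_eq_left {G : Type*} [Group G] [MeasurableSpace G] [MeasurableMul₂ G]
    (μ ν : Measure G) [IsProbabilityMeasure μ] [IsProbabilityMeasure ν]
    [μ.IsMulLeftInvariant] [ν.IsMulRightInvariant] : ν = μ := by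
  ext t ht
  have hg : Measurable (t.indicator (1 : G → ℝ≥0∞)) := measurable_one.indicator ht
  have key : ∫⁻ x, (∫⁻ y, t.indicator 1 (x * y) ∂μ) ∂ν
      = ∫⁻ y, (∫⁻ x, t.indicator 1 (x * y) ∂ν) ∂μ := by
    apply lintegral_lintegral_swap
    exact (hg.comp measurable_mul).aemeasurable
  have h1 : ∀ x : G, (∫⁻ y, t.indicator 1 (x * y) ∂μ) = μ t := fun x => by
    rw [lintegral_mul_left_eq_self (t.indicator 1) x, lintegral_indicator_one ht]
  have h2 : ∀ y : G, (∫⁻ x, t.indicator 1 (x * y) ∂ν) = ν t := fun y => by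
    rw [lintegral_mul_right_eq_self (t.indicator 1) y, lintegral_indicator_one ht]
  calc ν t = ∫⁻ y, ν t ∂μ := by simp
    _ = ∫⁻ y, (∫⁻ x, t.indicator 1 (x * y) ∂ν) ∂μ := by simp_rw [h2]
    _ = ∫⁻ x, (∫⁻ y, t.indicator 1 (x * y) ∂μ) ∂ν := key.symm
    _ = ∫⁻ x, μ t ∂ν := by simp_rw [h1]
    _ = μ t := by simp

lemma haar_inv_eq {m : ℕ} (μ : Measure (Matrix.unitaryGroup (Fin m) ℂ))
    [μ.IsHaarMeasure] [IsProbabilityMeasure μ] : μ.inv = μ := by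
  have : IsProbabilityMeasure μ.inv :=
    Measure.isProbabilityMeasure_map measurable_inv.aemeasurable
  exact right_eq_left μ μ.inv

end MeasureStuff


lemma Dblk_inv {m mt mr : ℕ} (U : Matrix.unitaryGroup (Fin m) ℂ) :
    Dblk m mt mr U⁻¹ = (jacobiH' m mt mr U)ᴴ := by
  ext i j
  simp [Dblk, jacobiH', Matrix.UnitaryGroup.inv_val, Matrix.star_apply,
    Matrix.conjTranspose_apply]

lemma cont_f2 {m mt mr : ℕ} {s : ℝ} (hs : 0 ≤ s) :
    Continuous fun U : Matrix.unitaryGroup (Fin m) ℂ =>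
      Real.log ((Matrix.det ((1 : Matrix (Fin (m - mr)) (Fin (m - mr)) ℂ) +
        (s : ℂ) • (Dblk m mt mr U * (Dblk m mt mr U)ᴴ))).re) := by
  have hD : Continuous fun U : Matrix.unitaryGroup (Fin m) ℂ => Dblk m mt mr U :=
    continuous_matrix fun i j =>
      (continuous_apply _).comp ((continuous_apply _).comp continuous_subtype_val)
  have hM : Continuous fun U : Matrix.unitaryGroup (Fin m) ℂ =>
      (1 : Matrix (Fin (m - mr)) (Fin (m - mr)) ℂ) +
        (s : ℂ) • (Dblk m mt mr U * (Dblk m mt mr U)ᴴ) :=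
    continuous_const.add ((continuous_const_smul (s : ℂ)).comp (hD.matrix_mul hD.matrix_conjTranspose))
  have hre : Continuous fun U : Matrix.unitaryGroup (Fin m) ℂ =>
      (Matrix.det ((1 : Matrix (Fin (m - mr)) (Fin (m - mr)) ℂ) +
        (s : ℂ) • (Dblk m mt mr U * (Dblk m mt mr U)ᴴ))).re :=
    Complex.continuous_re.comp hM.matrix_det
  exact hre.log fun U => (det_eq_re_ofPos (posdef_one_add_mulCT hs (Dblk m mt mr U))).2.ne'


/-- **Ergodic capacity decomposition when `mt + mr > m`.**
If `mt ≤ m`, `mr ≤ m` and `mt + mr > m`, then for every `s ≥ 0`,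
`E[ln det (I + s · Hᴴ H)] = (mt + mr − m) · ln (1 + s) + E[ln det (I + s · H'ᴴ H')]`,
where `H` is the upper-left `mr × mt` block and `H'` the lower-right
`(m − mt) × (m − mr)` block of a Haar-distributed unitary matrix. -/
theorem jacobi_ergodic_capacity_decomposition
    (m mt mr : ℕ) (hm : 0 < m) (hmt : 0 < mt) (hmr : 0 < mr)
    (ht : mt ≤ m) (hr : mr ≤ m) (hsum : m < mt + mr)
    (μ : Measure (Matrix.unitaryGroup (Fin m) ℂ))
    [μ.IsHaarMeasure] [IsProbabilityMeasure μ]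
    (s : ℝ) (hs : 0 ≤ s) :
    ergodicCapacity m mt mr hr ht s μ
      = ((mt : ℝ) + mr - m) * Real.log (1 + s) +
        ∫ U, Real.log ((Matrix.det ((1 : Matrix (Fin (m - mr)) (Fin (m - mr)) ℂ) +
          (s : ℂ) • ((jacobiH' m mt mr U)ᴴ * jacobiH' m mt mr U))).re) ∂μ := by
  have : μ.IsInvInvariant := ⟨haar_inv_eq μ⟩
  set c : ℝ := ((mt : ℝ) + mr - m) * Real.log (1 + s) with hc
  set f2 : Matrix.unitaryGroup (Fin m) ℂ → ℝ := fun U =>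
    Real.log ((Matrix.det ((1 : Matrix (Fin (m - mr)) (Fin (m - mr)) ℂ) +
      (s : ℂ) • (Dblk m mt mr U * (Dblk m mt mr U)ᴴ))).re) with hf2
  have hint : Integrable f2 μ :=
    (cont_f2 hs).integrable_of_hasCompactSupport (isClosed_tsupport _).isCompact
  have step1 : ergodicCapacity m mt mr hr ht s μ = ∫ U, (c + f2 U) ∂μ := by
    unfold ergodicCapacity
    congr 1
    funext U
    exact log_ident hr ht U hs
  have step2 : ∫ U, (c + f2 U) ∂μ = c + ∫ U, f2 U ∂μ := by
    rw [integral_add (integrable_const c) hint, integral_const]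
    simp
  have step3 : ∫ U, f2 U ∂μ = ∫ U, f2 U⁻¹ ∂μ := (integral_inv_eq_self f2 μ).symm
  have step4 : (fun U : Matrix.unitaryGroup (Fin m) ℂ => f2 U⁻¹)
      = fun U => Real.log ((Matrix.det ((1 : Matrix (Fin (m - mr)) (Fin (m - mr)) ℂ) +
          (s : ℂ) • ((jacobiH' m mt mr U)ᴴ * jacobiH' m mt mr U))).re) := by
    funext U
    rw [hf2]
    simp only [Dblk_inv, Matrix.conjTranspose_conjTranspose]
  rw [step1, step2, step3, step4]
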